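/- Every connected edge-critical equimatchable graph with at least one edge is 2-connected. -/

import Mathlib

open SimpleGraph

/-- `M` is a maximal matching of `G` (viewed as a subgraph of `G`): it is a matching and it is
not properly contained in any other matching of `G`. -/
def IsMaximalMatching {V : Type*} (G : SimpleGraph V) (M : G.Subgraph) : Prop :=
  M.IsMatching ∧ ∀ M' : G.Subgraph, M'.IsMatching → M ≤ M' → M' = M

/-- `G` is equimatchable if all maximal matchings of `G` have the same cardinality. -/
def Equimatchable {V : Type*} (G : SimpleGraph V) : Prop :=
  ∀ M₁ M₂ : G.Subgraph, IsMaximalMatching G M₁ → IsMaximalMatching G M₂ →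
    M₁.edgeSet.ncard = M₂.edgeSet.ncard

/-- The matching number ν(G): the maximum cardinality of a matching of `G`. -/
noncomputable def matchNum {V : Type*} (G : SimpleGraph V) : ℕ :=
  sSup {n : ℕ | ∃ M : G.Subgraph, M.IsMatching ∧ M.edgeSet.ncard = n}

/-- `G` is vertex-critical equimatchable (VCE): `G` is equimatchable and deleting any vertex
yields a non-equimatchable graph. -/
def VCE {V : Type*} (G : SimpleGraph V) : Prop :=
  Equimatchable G ∧ ∀ v : V, ¬ Equimatchable (G.induce {u | u ≠ v})

/-- `G` is edge-critical equimatchable (ECE): `G` is equimatchable and deleting any edge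
yields a non-equimatchable graph. -/
def ECE {V : Type*} (G : SimpleGraph V) : Prop :=
  Equimatchable G ∧ ∀ u v : V, G.Adj u v → ¬ Equimatchable (G.deleteEdges {s(u, v)})

/-- `G` is factor-critical: deleting any vertex yields a graph with a perfect matching. -/
def FactorCritical {V : Type*} (G : SimpleGraph V) : Prop :=
  ∀ v : V, ∃ M : (G.induce {u | u ≠ v}).Subgraph, M.IsPerfectMatching

/-- `G` is 2-connected: at least 3 vertices, connected, and deleting any vertex leaves a
connected graph. -/
def TwoConnected {V : Type*} [Fintype V] (G : SimpleGraph V) : Prop :=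
  3 ≤ Fintype.card V ∧ G.Connected ∧ ∀ v : V, (G.induce {u | u ≠ v}).Connected

/-- `G` is bipartite: its vertex set can be partitioned into two parts such that every edge
joins the two parts. -/
def IsBipartiteGraph {V : Type*} (G : SimpleGraph V) : Prop :=
  ∃ s : Set V, ∀ u w : V, G.Adj u w → (u ∈ s ↔ w ∉ s)

/-- `G` is randomly matchable: every matching of `G` extends to a perfect matching. -/
def RandomlyMatchable {V : Type*} (G : SimpleGraph V) : Prop :=
  ∀ M : G.Subgraph, M.IsMatching → ∃ P : G.Subgraph, M ≤ P ∧ P.IsPerfectMatching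

section MyHelpers

variable {V : Type*} {G : SimpleGraph V}

lemma myMatch_eq {M : G.Subgraph} (hM : M.IsMatching) {u w w' : V}
    (h1 : M.Adj u w) (h2 : M.Adj u w') : w = w' := by
  obtain ⟨c, _, hun⟩ := hM (M.edge_vert h1)
  rw [hun w h1, hun w' h2]

/-- The restriction of a subgraph to the edges with both endpoints in `S`. -/
def restrictS (M : G.Subgraph) (S : Set V) : G.Subgraph where
  verts := {u | u ∈ S ∧ ∃ w, w ∈ S ∧ M.Adj u w}
  Adj u w := M.Adj u w ∧ u ∈ S ∧ w ∈ S
  adj_sub h := M.adj_sub h.1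
  edge_vert h := ⟨h.2.1, _, h.2.2, h.1⟩
  symm := ⟨fun u w ⟨h, hu, hw⟩ => ⟨M.adj_symm h, hw, hu⟩⟩

lemma restrictS_isMatching {M : G.Subgraph} (hM : M.IsMatching) (S : Set V) :
    (restrictS M S).IsMatching := by
  rintro u ⟨huS, w, hwS, hadj⟩
  exact ⟨w, ⟨hadj, huS, hwS⟩, fun y hy => myMatch_eq hM hy.1 hadj⟩

lemma restrictS_verts_subset {M : G.Subgraph} {S : Set V} : (restrictS M S).verts ⊆ S :=
  fun _ h => h.1

lemma restrictS_le {M : G.Subgraph} {S : Set V} : restrictS M S ≤ M :=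
  ⟨fun u hu => by obtain ⟨_, w, _, h⟩ := hu; exact M.edge_vert h, fun _ _ h => h.1⟩

lemma mem_restrictS_verts {M : G.Subgraph} {S : Set V} {u w : V}
    (hu : u ∈ S) (hw : w ∈ S) (h : M.Adj u w) : u ∈ (restrictS M S).verts :=
  ⟨hu, w, hw, h⟩

/-- A matching is maximal iff it dominates every edge of `G`. -/
lemma isMaximal_iff {M : G.Subgraph} (hM : M.IsMatching) :
    IsMaximalMatching G M ↔ ∀ a b : V, G.Adj a b → a ∈ M.verts ∨ b ∈ M.verts := by
  constructor
  · intro hmax a b hab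
    by_contra hcon
    push_neg at hcon
    obtain ⟨ha, hb⟩ := hcon
    have hsOA : (G.subgraphOfAdj hab).IsMatching := Subgraph.IsMatching.subgraphOfAdj hab
    have hM' : (M ⊔ G.subgraphOfAdj hab).IsMatching := by
      refine hM.sup hsOA ?_
      rw [hM.support_eq_verts, hsOA.support_eq_verts, subgraphOfAdj_verts]
      rw [Set.disjoint_right]
      intro z hz
      simp only [Set.mem_insert_iff, Set.mem_singleton_iff] at hz
      rcases hz with rfl | rfl <;> assumption
    have heq := hmax.2 _ hM' le_sup_left
    apply ha
    rw [← heq]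
    rw [Subgraph.verts_sup]
    exact Set.mem_union_right _ (by simp)
  · intro hdom
    refine ⟨hM, fun M' hM' hle => ?_⟩
    have hadj : ∀ p q, M'.Adj p q → M.Adj p q := by
      intro p q h
      rcases hdom p q (M'.adj_sub h) with hp | hq
      · obtain ⟨c, hc, _⟩ := hM hp
        have hqc : q = c := myMatch_eq hM' h (hle.2 hc)
        rwa [hqc]
      · obtain ⟨c, hc, _⟩ := hM hq
        have hpc : p = c := myMatch_eq hM' (M'.adj_symm h) (hle.2 hc)
        exact M.adj_symm (hpc ▸ hc)
    apply Subgraph.ext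
    · apply Set.Subset.antisymm
      · intro u hu
        obtain ⟨w, hw, _⟩ := hM' hu
        exact M.edge_vert (hadj _ _ hw)
      · exact hle.1
    · ext p q
      exact ⟨hadj p q, fun h => hle.2 h⟩

/-- Key extraction from edge-criticality: there is a maximal matching using the edge `xv`
which saturates all neighbours of `x` and of `v`. -/
lemma key_lemma (hEq : Equimatchable G) {x v : V} (hxv : G.Adj x v)
    (hne : ¬ Equimatchable (G.deleteEdges {s(x, v)})) :
    ∃ N : G.Subgraph, IsMaximalMatching G N ∧ N.Adj x v ∧
      (∀ z, G.Adj x z → z ∈ N.verts) ∧ (∀ z, G.Adj v z → z ∈ N.verts) := by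
  set G' := G.deleteEdges {s(x, v)} with hG'
  have hle : G' ≤ G := G.deleteEdges_le _
  let lift : G'.Subgraph → G.Subgraph := fun M =>
    { verts := M.verts
      Adj := M.Adj
      adj_sub := fun h => hle (M.adj_sub h)
      edge_vert := fun h => M.edge_vert h
      symm := M.symm }
  have hliftM : ∀ M : G'.Subgraph, M.IsMatching → (lift M).IsMatching := fun M h => h
  have hliftE : ∀ M : G'.Subgraph, (lift M).edgeSet = M.edgeSet := fun M => rfl
  rw [Equimatchable] at hne
  push_neg at hne
  obtain ⟨M₁, M₂, h₁, h₂, hne12⟩ := hne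
  have hG'adj : ∀ a b : V, G.Adj a b → s(a, b) ≠ s(x, v) → G'.Adj a b := by
    intro a b hab hs
    rw [hG', deleteEdges_adj]
    exact ⟨hab, by simpa using hs⟩
  have hdicho : ∀ M : G'.Subgraph, IsMaximalMatching G' M →
      (x ∉ M.verts ∧ v ∉ M.verts) ∨ IsMaximalMatching G (lift M) := by
    intro M hMm
    by_cases hx : x ∈ M.verts ∨ v ∈ M.verts
    · right
      refine (isMaximal_iff (hliftM M hMm.1)).mpr ?_
      intro a b hab
      by_cases he : s(a, b) = s(x, v)
      · rw [Sym2.eq_iff] at he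
        rcases he with ⟨rfl, rfl⟩ | ⟨rfl, rfl⟩
        · exact hx
        · exact hx.symm
      · exact (isMaximal_iff hMm.1).mp hMm a b (hG'adj a b hab he)
    · left
      push_neg at hx
      exact hx
  have hexM : ∃ M : G'.Subgraph, IsMaximalMatching G' M ∧ x ∉ M.verts ∧ v ∉ M.verts := by
    rcases hdicho M₁ h₁ with h | hg1
    · exact ⟨M₁, h₁, h⟩
    rcases hdicho M₂ h₂ with h | hg2
    · exact ⟨M₂, h₂, h⟩
    exact absurd (hEq _ _ hg1 hg2) (by rw [hliftE, hliftE]; exact hne12)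
  obtain ⟨M, hMm, hxM, hvM⟩ := hexM
  have hxvne : x ≠ v := hxv.ne
  refine ⟨lift M ⊔ G.subgraphOfAdj hxv, ?_, ?_, ?_, ?_⟩
  case refine_2 => exact Subgraph.sup_adj.mpr (Or.inr (by simp))
  case refine_1 =>
    have hNmatch : (lift M ⊔ G.subgraphOfAdj hxv).IsMatching := by
      refine (hliftM M hMm.1).sup (Subgraph.IsMatching.subgraphOfAdj hxv) ?_
      rw [(hliftM M hMm.1).support_eq_verts,
        (Subgraph.IsMatching.subgraphOfAdj hxv).support_eq_verts, subgraphOfAdj_verts]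
      rw [Set.disjoint_right]
      intro z hz
      simp only [Set.mem_insert_iff, Set.mem_singleton_iff] at hz
      rcases hz with rfl | rfl <;> assumption
    refine (isMaximal_iff hNmatch).mpr ?_
    intro a b hab
    have hverts : (lift M ⊔ G.subgraphOfAdj hxv).verts = M.verts ∪ {x, v} := by
      rw [Subgraph.verts_sup, subgraphOfAdj_verts]
    rw [hverts]
    by_cases he : s(a, b) = s(x, v)
    · rcases Sym2.eq_iff.mp he with ⟨rfl, rfl⟩ | ⟨rfl, rfl⟩
      · exact Or.inl (Set.mem_union_right _ (by simp))
      · exact Or.inr (Set.mem_union_right _ (by simp))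
    · rcases (isMaximal_iff hMm.1).mp hMm a b (hG'adj a b hab he) with h | h
      · exact Or.inl (Set.mem_union_left _ h)
      · exact Or.inr (Set.mem_union_left _ h)
  case refine_3 =>
    intro z hz
    rw [Subgraph.verts_sup, subgraphOfAdj_verts]
    by_cases hzv : z = v
    · exact Set.mem_union_right _ (by simp [hzv])
    · have hs : s(x, z) ≠ s(x, v) := fun h => by
        rcases Sym2.eq_iff.mp h with ⟨_, h2⟩ | ⟨h1, _⟩
        exacts [hzv h2, hxvne h1]
      rcases (isMaximal_iff hMm.1).mp hMm x z (hG'adj x z hz hs) with h | h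
      · exact absurd h hxM
      · exact Set.mem_union_left _ h
  case refine_4 =>
    intro z hz
    rw [Subgraph.verts_sup, subgraphOfAdj_verts]
    by_cases hzx : z = x
    · exact Set.mem_union_right _ (by simp [hzx])
    · have hs : s(v, z) ≠ s(x, v) := fun h => by
        rcases Sym2.eq_iff.mp h with ⟨h1, _⟩ | ⟨_, h2⟩
        exacts [hxvne h1.symm, hzx h2]
      rcases (isMaximal_iff hMm.1).mp hMm v z (hG'adj v z hz hs) with h | h
      · exact absurd h hvM
      · exact Set.mem_union_left _ h


lemma restrictS_edge_disjoint {M N : G.Subgraph} {S T : Set V} (h : Disjoint S T) :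
    Disjoint (restrictS M S).edgeSet (restrictS N T).edgeSet := by
  rw [Set.disjoint_left]
  intro e
  induction e using Sym2.ind with
  | _ p q =>
    intro he he'
    exact Set.disjoint_left.mp h (Subgraph.mem_edgeSet.mp he).2.1
      (Subgraph.mem_edgeSet.mp he').2.1

lemma ncard3 {α : Type*} {e : α} {s t : Set α} (hfs : s.Finite) (hft : t.Finite)
    (hes : e ∉ s) (het : e ∉ t) (hst : Disjoint s t) :
    ({e} ∪ (s ∪ t) : Set α).ncard = s.ncard + t.ncard + 1 := by
  rw [Set.ncard_union_eq (Set.disjoint_singleton_left.mpr (by simp [hes, het]))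
    (Set.finite_singleton e) (hfs.union hft), Set.ncard_union_eq hst hfs hft,
    Set.ncard_singleton]
  omega

lemma matching_decomp {M : G.Subgraph} (hM : M.IsMatching) {c d : V} (hcd : M.Adj c d)
    {S T : Set V} (hdS : d ∉ S) (hdT : d ∉ T)
    (hcover : ∀ z, z ≠ d → z ∈ S ∨ z ∈ T)
    (hcrossn : ∀ p q, G.Adj p q → p ∈ S → q ∈ T → False) :
    M.edgeSet = {s(c, d)} ∪ ((restrictS M S).edgeSet ∪ (restrictS M T).edgeSet) := by
  ext e
  induction e using Sym2.ind with
  | _ p q =>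
    simp only [Subgraph.mem_edgeSet, Set.mem_union, Set.mem_singleton_iff]
    constructor
    · intro h
      by_cases hpd : p = d
      · subst hpd
        have hqc : q = c := myMatch_eq hM h (M.adj_symm hcd)
        subst hqc
        exact Or.inl Sym2.eq_swap
      by_cases hqd : q = d
      · subst hqd
        have hpc : p = c := myMatch_eq hM (M.adj_symm h) (M.adj_symm hcd)
        subst hpc
        exact Or.inl rfl
      · rcases hcover p hpd with hp | hp <;> rcases hcover q hqd with hq | hq
        · exact Or.inr (Or.inl ⟨h, hp, hq⟩)
        · exact (hcrossn p q (M.adj_sub h) hp hq).elim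
        · exact (hcrossn q p (G.adj_symm (M.adj_sub h)) hq hp).elim
        · exact Or.inr (Or.inr ⟨h, hp, hq⟩)
    · rintro (h | h | h)
      · rw [Sym2.eq_iff] at h
        rcases h with ⟨rfl, rfl⟩ | ⟨rfl, rfl⟩
        · exact hcd
        · exact M.adj_symm hcd
      · exact h.1
      · exact h.1

end MyHelpers

/-- Every connected edge-critical equimatchable graph with at least one edge is
2-connected. -/
theorem ece_twoConnected {V : Type*} [Fintype V] (G : SimpleGraph V)
    (hconn : G.Connected) (hedge : G.edgeSet.Nonempty) (hece : ECE G) :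
    TwoConnected G := by
  classical
  obtain ⟨hEq, hCrit⟩ := hece
  obtain ⟨u, w, he⟩ := Sym2.exists.mp hedge
  have huw : G.Adj u w := he
  have hcard : 3 ≤ Fintype.card V := by
    by_contra hlt
    push_neg at hlt
    have hne : u ≠ w := huw.ne
    have hall : ∀ z : V, z = u ∨ z = w := by
      intro z
      by_contra hz
      push_neg at hz
      have h3 : ({z, u, w} : Finset V).card = 3 := by
        rw [Finset.card_insert_of_notMem (by simp [hz.1, hz.2]),
          Finset.card_insert_of_notMem (by simp [hne]), Finset.card_singleton]
      have hle3 := Finset.card_le_univ ({z, u, w} : Finset V)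
      rw [h3] at hle3
      omega
    refine hCrit u w huw ?_
    intro M₁ M₂ _ _
    have hempty : ∀ M : (G.deleteEdges {s(u, w)}).Subgraph, M.edgeSet = ∅ := by
      intro M
      ext e
      simp only [Set.mem_empty_iff_false, iff_false]
      induction e using Sym2.ind with
      | _ p q =>
        intro hpq
        have h' := M.adj_sub (Subgraph.mem_edgeSet.mp hpq)
        rw [deleteEdges_adj] at h'
        refine h'.2 ?_
        have hpqne : p ≠ q := h'.1.ne
        simp only [Set.mem_singleton_iff]
        rcases hall p with rfl | rfl <;> rcases hall q with rfl | rfl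
        · exact absurd rfl hpqne
        · rfl
        · exact Sym2.eq_swap
        · exact absurd rfl hpqne
    rw [hempty M₁, hempty M₂]
  refine ⟨hcard, hconn, ?_⟩
  intro v
  by_contra hHc
  obtain ⟨a0, ha0⟩ := Fintype.exists_ne_of_one_lt_card (by omega) v
  haveI hnemp : Nonempty ↑{u : V | u ≠ v} := ⟨⟨a0, ha0⟩⟩
  have hne' : ¬ (G.induce {u | u ≠ v}).Preconnected := fun hp => hHc (Connected.mk hp)
  rw [Preconnected] at hne'
  push_neg at hne'
  obtain ⟨a, b, hnr⟩ := hne'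
  set A : Set V := {z | ∃ h : z ≠ v, (G.induce {u | u ≠ v}).Reachable a ⟨z, h⟩} with hA
  set B : Set V := {z | z ≠ v ∧ z ∉ A} with hB
  have hAv : ∀ z ∈ A, z ≠ v := fun z hz => hz.choose
  have haA : (a : V) ∈ A := ⟨a.2, by rw [Subtype.coe_eta]⟩
  have hbB : (b : V) ∈ B := by
    refine ⟨b.2, fun hc => ?_⟩
    obtain ⟨h, hr⟩ := hc
    exact hnr (by rwa [Subtype.coe_eta] at hr)
  have hcross : ∀ p q : V, G.Adj p q → p ∈ A → q ≠ v → q ∈ A := by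
    rintro p q hpq ⟨hp, hr⟩ hq
    exact ⟨hq, hr.trans (Adj.reachable (by simpa using hpq))⟩
  have hAB : ∀ p q : V, G.Adj p q → p ∈ A → q ∈ B → False :=
    fun p q hpq hp hq => hq.2 (hcross p q hpq hp hq.1)
  obtain ⟨W⟩ := hconn.preconnected (a : V) (b : V)
  have lemA : ∀ (p q : V) (wlk : G.Walk p q), p ∈ A → q ∉ A → ∃ x ∈ A, G.Adj x v := by
    intro p q wlk
    induction wlk with
    | nil => intro hp hq; exact absurd hp hq
    | @cons p c q h wlk ih =>
      intro hp hq
      by_cases hc : c ∈ A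
      · exact ih hc hq
      · by_cases hcv : c = v
        · exact ⟨p, hp, hcv ▸ h⟩
        · exact absurd (hcross p c h hp hcv) hc
  have lemB : ∀ (p q : V) (wlk : G.Walk p q), p ∉ B → q ∈ B → ∃ y ∈ B, G.Adj v y := by
    intro p q wlk
    induction wlk with
    | nil => intro hp hq; exact absurd hq hp
    | @cons p c q h wlk ih =>
      intro hp hq
      by_cases hc : c ∈ B
      · by_cases hpv : p = v
        · exact ⟨c, hc, hpv ▸ h⟩
        · have hpA : p ∈ A := by
            by_contra hpA
            exact hp ⟨hpv, hpA⟩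
          exact (hAB p c h hpA hc).elim
      · exact ih hc hq
  obtain ⟨x, hxA, hxv⟩ := lemA _ _ W haA (fun h => hbB.2 h)
  obtain ⟨y, hyB, hvy⟩ := lemB _ _ W (fun h => h.2 haA) hbB
  obtain ⟨N, hNmax, hNxv, hNx, hNv⟩ := key_lemma hEq hxv (hCrit x v hxv)
  obtain ⟨N', hN'max, hN'vy, hN'v, hN'y⟩ := key_lemma hEq hvy (hCrit v y hvy)
  have hNm : N.IsMatching := hNmax.1
  have hN'm : N'.IsMatching := hN'max.1
  have hvA : v ∉ A := fun h => hAv v h rfl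
  have hvB : v ∉ B := fun h => h.1 rfl
  have hABdisj : Disjoint A B := Set.disjoint_left.mpr (fun z hz hz' => hz'.2 hz)
  have hcover : ∀ z : V, z ≠ v → z ∈ A ∨ z ∈ B :=
    fun z h => or_iff_not_imp_left.mpr (fun h2 => ⟨h, h2⟩)
  have hyA : y ∉ A := hyB.2
  have hxB : x ∉ B := fun h => h.2 hxA
  have locate : ∀ (M : G.Subgraph), M.IsMatching → ∀ c : V, M.Adj c v →
      ∀ S : Set V, (S = A ∨ S = B) → ∀ z, z ∈ M.verts → z ∈ S → z ≠ c →
      z ∈ (restrictS M S).verts := by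
    intro M hM c hcv S hS z hz hzS hzc
    obtain ⟨wz, hwz, _⟩ := hM hz
    have hwv : wz ≠ v := by
      rintro rfl
      exact hzc (myMatch_eq hM (M.adj_symm hwz) (M.adj_symm hcv))
    have hwS : wz ∈ S := by
      rcases hcover wz hwv with hw | hw
      · rcases hS with rfl | rfl
        · exact hw
        · exact (hAB wz z (G.adj_symm (M.adj_sub hwz)) hw hzS).elim
      · rcases hS with rfl | rfl
        · exact (hAB z wz (M.adj_sub hwz) hzS hw).elim
        · exact hw
    exact mem_restrictS_verts hzS hwS hwz
  set P := restrictS N A with hPdef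
  set NB := restrictS N B with hNBdef
  set Q' := restrictS N' A with hQ'def
  set P' := restrictS N' B with hP'def
  have hPm : P.IsMatching := restrictS_isMatching hNm A
  have hNBm : NB.IsMatching := restrictS_isMatching hNm B
  have hQ'm : Q'.IsMatching := restrictS_isMatching hN'm A
  have hP'm : P'.IsMatching := restrictS_isMatching hN'm B
  have hdomN := (isMaximal_iff hNm).mp hNmax
  have hdomN' := (isMaximal_iff hN'm).mp hN'max
  have hlocN := locate N hNm x hNxv
  have hlocN' := locate N' hN'm y (N'.adj_symm hN'vy)
  have hPdom : ∀ p q, G.Adj p q → p ∈ A → q ∈ A → p ∈ P.verts ∨ q ∈ P.verts := by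
    have haux : ∀ p q, G.Adj p q → p ∈ A → q ∈ A → p ∈ N.verts →
        p ∈ P.verts ∨ q ∈ P.verts := by
      intro p q hpq hp hq hpN
      by_cases hpx : p = x
      · subst hpx
        exact Or.inr (hlocN A (Or.inl rfl) q (hNx q hpq) hq hpq.ne')
      · exact Or.inl (hlocN A (Or.inl rfl) p hpN hp hpx)
    intro p q hpq hp hq
    rcases hdomN p q hpq with h | h
    · exact haux p q hpq hp hq h
    · exact (haux q p (G.adj_symm hpq) hq hp h).symm
  have hNBdom : ∀ p q, G.Adj p q → p ∈ B → q ∈ B → p ∈ NB.verts ∨ q ∈ NB.verts := by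
    intro p q hpq hp hq
    rcases hdomN p q hpq with h | h
    · exact Or.inl (hlocN B (Or.inr rfl) p h hp (fun he => hxB (he ▸ hp)))
    · exact Or.inr (hlocN B (Or.inr rfl) q h hq (fun he => hxB (he ▸ hq)))
  have hQ'dom : ∀ p q, G.Adj p q → p ∈ A → q ∈ A → p ∈ Q'.verts ∨ q ∈ Q'.verts := by
    intro p q hpq hp hq
    rcases hdomN' p q hpq with h | h
    · exact Or.inl (hlocN' A (Or.inl rfl) p h hp (fun he => hyA (he ▸ hp)))
    · exact Or.inr (hlocN' A (Or.inl rfl) q h hq (fun he => hyA (he ▸ hq)))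
  have hP'dom : ∀ p q, G.Adj p q → p ∈ B → q ∈ B → p ∈ P'.verts ∨ q ∈ P'.verts := by
    have haux : ∀ p q, G.Adj p q → p ∈ B → q ∈ B → p ∈ N'.verts →
        p ∈ P'.verts ∨ q ∈ P'.verts := by
      intro p q hpq hp hq hpN
      by_cases hpy : p = y
      · subst hpy
        exact Or.inr (hlocN' B (Or.inr rfl) q (hN'y q hpq) hq hpq.ne')
      · exact Or.inl (hlocN' B (Or.inr rfl) p hpN hp hpy)
    intro p q hpq hp hq
    rcases hdomN' p q hpq with h | h
    · exact haux p q hpq hp hq h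
    · exact (haux q p (G.adj_symm hpq) hq hp h).symm
  have hvAQ' : ∀ z, G.Adj v z → z ∈ A → z ∈ Q'.verts :=
    fun z hz hzA => hlocN' A (Or.inl rfl) z (hN'v z hz) hzA (fun he => hyA (he ▸ hzA))
  have hvBNB : ∀ z, G.Adj v z → z ∈ B → z ∈ NB.verts :=
    fun z hz hzB => hlocN B (Or.inr rfl) z (hNv z hz) hzB (fun he => hxB (he ▸ hzB))
  have hyP' : y ∉ P'.verts := by
    rintro ⟨-, wz, hwB, hadj⟩
    have hwv : wz = v := myMatch_eq hN'm hadj (N'.adj_symm hN'vy)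
    exact hvB (hwv ▸ hwB)
  -- the two recombined matchings
  have hPP'disj : Disjoint P.verts P'.verts := Set.disjoint_left.mpr
    (fun z hz hz' => Set.disjoint_left.mp hABdisj (restrictS_verts_subset hz)
      (restrictS_verts_subset hz'))
  have hPP'm : (P ⊔ P').IsMatching := by
    refine hPm.sup hP'm ?_
    rwa [hPm.support_eq_verts, hP'm.support_eq_verts]
  set W3 := G.subgraphOfAdj hvy ⊔ (P ⊔ P') with hW3def
  set W4 := Q' ⊔ NB with hW4def
  have hW3m : W3.IsMatching := by
    refine (Subgraph.IsMatching.subgraphOfAdj hvy).sup hPP'm ?_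
    rw [(Subgraph.IsMatching.subgraphOfAdj hvy).support_eq_verts, hPP'm.support_eq_verts,
      subgraphOfAdj_verts, Subgraph.verts_sup]
    rw [Set.disjoint_left]
    intro z hz
    simp only [Set.mem_insert_iff, Set.mem_singleton_iff] at hz
    rcases hz with rfl | rfl
    · rintro (h | h)
      · exact hvA (restrictS_verts_subset h)
      · exact hvB (restrictS_verts_subset h)
    · rintro (h | h)
      · exact hyA (restrictS_verts_subset h)
      · exact hyP' h
  have hW4m : W4.IsMatching := by
    refine hQ'm.sup hNBm ?_
    rw [hQ'm.support_eq_verts, hNBm.support_eq_verts]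
    exact Set.disjoint_left.mpr (fun z hz hz' => Set.disjoint_left.mp hABdisj
      (restrictS_verts_subset hz) (restrictS_verts_subset hz'))
  have hW3verts : W3.verts = ({v, y} : Set V) ∪ (P.verts ∪ P'.verts) := by
    rw [hW3def, Subgraph.verts_sup, Subgraph.verts_sup, subgraphOfAdj_verts]
  have hW3max : IsMaximalMatching G W3 := by
    refine (isMaximal_iff hW3m).mpr ?_
    intro p q hpq
    rw [hW3verts]
    by_cases hpv : p = v
    · exact Or.inl (Set.mem_union_left _ (by simp [hpv]))
    by_cases hqv : q = v
    · exact Or.inr (Set.mem_union_left _ (by simp [hqv]))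
    rcases hcover p hpv with hp | hp <;> rcases hcover q hqv with hq | hq
    · rcases hPdom p q hpq hp hq with h | h
      · exact Or.inl (Set.mem_union_right _ (Set.mem_union_left _ h))
      · exact Or.inr (Set.mem_union_right _ (Set.mem_union_left _ h))
    · exact (hAB p q hpq hp hq).elim
    · exact (hAB q p (G.adj_symm hpq) hq hp).elim
    · rcases hP'dom p q hpq hp hq with h | h
      · exact Or.inl (Set.mem_union_right _ (Set.mem_union_right _ h))
      · exact Or.inr (Set.mem_union_right _ (Set.mem_union_right _ h))
  have hW4verts : W4.verts = Q'.verts ∪ NB.verts := by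
    rw [hW4def, Subgraph.verts_sup]
  have hW4max : IsMaximalMatching G W4 := by
    refine (isMaximal_iff hW4m).mpr ?_
    intro p q hpq
    rw [hW4verts]
    by_cases hpv : p = v
    · subst hpv
      rcases hcover q hpq.ne' with hq | hq
      · exact Or.inr (Set.mem_union_left _ (hvAQ' q hpq hq))
      · exact Or.inr (Set.mem_union_right _ (hvBNB q hpq hq))
    by_cases hqv : q = v
    · subst hqv
      rcases hcover p hpq.ne with hp | hp
      · exact Or.inl (Set.mem_union_left _ (hvAQ' p (G.adj_symm hpq) hp))
      · exact Or.inl (Set.mem_union_right _ (hvBNB p (G.adj_symm hpq) hp))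
    rcases hcover p hpv with hp | hp <;> rcases hcover q hqv with hq | hq
    · rcases hQ'dom p q hpq hp hq with h | h
      · exact Or.inl (Set.mem_union_left _ h)
      · exact Or.inr (Set.mem_union_left _ h)
    · exact (hAB p q hpq hp hq).elim
    · exact (hAB q p (G.adj_symm hpq) hq hp).elim
    · rcases hNBdom p q hpq hp hq with h | h
      · exact Or.inl (Set.mem_union_right _ h)
      · exact Or.inr (Set.mem_union_right _ h)
  -- counting
  have hfin : ∀ s : Set (Sym2 V), s.Finite := by
    have hfs : Finite (Sym2 V) := Finite.of_surjective (fun p : V × V => s(p.1, p.2))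
      (fun e => Sym2.ind (fun a b => ⟨(a, b), rfl⟩) e)
    exact fun s => s.toFinite
  have hdecN : N.edgeSet = {s(x, v)} ∪ (P.edgeSet ∪ NB.edgeSet) :=
    matching_decomp hNm hNxv hvA hvB hcover hAB
  have hdecN' : N'.edgeSet = {s(y, v)} ∪ (Q'.edgeSet ∪ P'.edgeSet) :=
    matching_decomp hN'm (N'.adj_symm hN'vy) hvA hvB hcover hAB
  have hW3edge : W3.edgeSet = {s(v, y)} ∪ (P.edgeSet ∪ P'.edgeSet) := by
    rw [hW3def, Subgraph.edgeSet_sup, Subgraph.edgeSet_sup, edgeSet_subgraphOfAdj]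
  have hW4edge : W4.edgeSet = Q'.edgeSet ∪ NB.edgeSet := by
    rw [hW4def, Subgraph.edgeSet_sup]
  have hePNB : Disjoint P.edgeSet NB.edgeSet := restrictS_edge_disjoint hABdisj
  have hePP' : Disjoint P.edgeSet P'.edgeSet := restrictS_edge_disjoint hABdisj
  have heQ'P' : Disjoint Q'.edgeSet P'.edgeSet := restrictS_edge_disjoint hABdisj
  have heQ'NB : Disjoint Q'.edgeSet NB.edgeSet := restrictS_edge_disjoint hABdisj
  have hxvP : s(x, v) ∉ P.edgeSet := fun h => hvA (Subgraph.mem_edgeSet.mp h).2.2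
  have hxvNB : s(x, v) ∉ NB.edgeSet := fun h => hvB (Subgraph.mem_edgeSet.mp h).2.2
  have hyvQ' : s(y, v) ∉ Q'.edgeSet := fun h => hvA (Subgraph.mem_edgeSet.mp h).2.2
  have hyvP' : s(y, v) ∉ P'.edgeSet := fun h => hvB (Subgraph.mem_edgeSet.mp h).2.2
  have hvyP : s(v, y) ∉ P.edgeSet := fun h => hvA (Subgraph.mem_edgeSet.mp h).2.1
  have hvyP' : s(v, y) ∉ P'.edgeSet := fun h => hvB (Subgraph.mem_edgeSet.mp h).2.1
  have c1 : N.edgeSet.ncard = P.edgeSet.ncard + NB.edgeSet.ncard + 1 := by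
    rw [hdecN]; exact ncard3 (hfin _) (hfin _) hxvP hxvNB hePNB
  have c2 : N'.edgeSet.ncard = Q'.edgeSet.ncard + P'.edgeSet.ncard + 1 := by
    rw [hdecN']; exact ncard3 (hfin _) (hfin _) hyvQ' hyvP' heQ'P'
  have c3 : W3.edgeSet.ncard = P.edgeSet.ncard + P'.edgeSet.ncard + 1 := by
    rw [hW3edge]; exact ncard3 (hfin _) (hfin _) hvyP hvyP' hePP'
  have c4 : W4.edgeSet.ncard = Q'.edgeSet.ncard + NB.edgeSet.ncard := by
    rw [hW4edge]; exact Set.ncard_union_eq heQ'NB (hfin _) (hfin _)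
  have e1 := hEq N W3 hNmax hW3max
  have e2 := hEq N' W3 hN'max hW3max
  have e3 := hEq N W4 hNmax hW4max
  rw [c1, c3] at e1
  rw [c2, c3] at e2
  rw [c1, c4] at e3
  omega
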